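/- Let γ ∈ Sp(2n,ℝ) with γ·τ(γ) = I. Then γ = τ(h)h⁻¹ for some h ∈ Sp(2n,ℝ) if and only if there exists Z in the Siegel upper half space with γ·Z = -conj(Z). -/

import Mathlib

noncomputable section
open Matrix Complex

/-- 2n×2n real matrices in n×n block form. -/
abbrev SpMat (n : ℕ) := Matrix (Fin n ⊕ Fin n) (Fin n ⊕ Fin n) ℝ

/-- The standard symplectic form J = [[0,I],[-I,0]]. -/
def J (n : ℕ) : SpMat n := fromBlocks 0 1 (-1) 0

/-- I₋ = diag(-Iₙ, Iₙ). -/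
def Iminus (n : ℕ) : SpMat n := fromBlocks (-1) 0 0 1

/-- The real symplectic group Sp(2n,ℝ). -/
def Sp (n : ℕ) : Set (SpMat n) := {g | gᵀ * J n * g = J n}

/-- The involution τ(g) = I₋ g I₋. -/
def tau {n : ℕ} (g : SpMat n) : SpMat n := Iminus n * g * Iminus n

/-- The Siegel upper half space: symmetric complex matrices with positive definite
imaginary part. -/
def Siegel (n : ℕ) : Set (Matrix (Fin n) (Fin n) ℂ) :=
  {Z | Zᵀ = Z ∧ (Matrix.of fun i j => (Z i j).im).PosDef}

/-- The action of Sp(2n,ℝ) on the Siegel space by fractional linear transformations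
g·Z = (AZ+B)(CZ+D)⁻¹. -/
def act {n : ℕ} (g : SpMat n) (Z : Matrix (Fin n) (Fin n) ℂ) : Matrix (Fin n) (Fin n) ℂ :=
  (g.toBlocks₁₁.map Complex.ofReal * Z + g.toBlocks₁₂.map Complex.ofReal) *
    (g.toBlocks₂₁.map Complex.ofReal * Z + g.toBlocks₂₂.map Complex.ofReal)⁻¹

/-- Entrywise complex conjugation of a matrix. -/
def conjM {n : ℕ} (Z : Matrix (Fin n) (Fin n) ℂ) : Matrix (Fin n) (Fin n) ℂ :=
  Z.map (starRingEnd ℂ)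

namespace Cob
open scoped ComplexOrder

variable {n : ℕ}

/-- complexification of a real matrix -/
def cM (A : Matrix (Fin n) (Fin n) ℝ) : Matrix (Fin n) (Fin n) ℂ :=
  A.map Complex.ofReal

lemma cM_apply (A : Matrix (Fin n) (Fin n) ℝ) (i j) : cM A i j = (A i j : ℂ) := rfl

lemma cM_mul (A B : Matrix (Fin n) (Fin n) ℝ) : cM (A * B) = cM A * cM B := by
  ext i j; simp [cM, Matrix.mul_apply]

lemma cM_add (A B : Matrix (Fin n) (Fin n) ℝ) : cM (A + B) = cM A + cM B := by
  ext i j; simp [cM]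

lemma cM_one : cM (1 : Matrix (Fin n) (Fin n) ℝ) = 1 := by
  ext i j; by_cases h : i = j <;> simp [cM, Matrix.one_apply, h]

lemma cM_zero : cM (0 : Matrix (Fin n) (Fin n) ℝ) = 0 := by ext i j; simp [cM]

lemma cM_neg (A : Matrix (Fin n) (Fin n) ℝ) : cM (-A) = -cM A := by ext i j; simp [cM]

lemma cM_transpose (A : Matrix (Fin n) (Fin n) ℝ) : cM Aᵀ = (cM A)ᵀ := by
  ext i j; simp [cM]

lemma cM_inj {A B : Matrix (Fin n) (Fin n) ℝ} (h : cM A = cM B) : A = B := by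
  ext i j
  have : (A i j : ℂ) = (B i j : ℂ) := congrFun (congrFun h i) j
  exact_mod_cast this

lemma conjM_cM (A : Matrix (Fin n) (Fin n) ℝ) : conjM (cM A) = cM A := by
  ext i j; simp [cM, conjM]

lemma cM_det (A : Matrix (Fin n) (Fin n) ℝ) : (cM A).det = (A.det : ℂ) := by
  exact (RingHom.map_det Complex.ofRealHom A).symm

lemma conjM_mul (A B : Matrix (Fin n) (Fin n) ℂ) : conjM (A * B) = conjM A * conjM B := by
  ext i j; simp [conjM, Matrix.mul_apply]

lemma conjM_add (A B : Matrix (Fin n) (Fin n) ℂ) : conjM (A + B) = conjM A + conjM B := by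
  ext i j; simp [conjM]

lemma conjM_neg (A : Matrix (Fin n) (Fin n) ℂ) : conjM (-A) = -conjM A := by
  ext i j; simp [conjM]

lemma conjM_conjM (A : Matrix (Fin n) (Fin n) ℂ) : conjM (conjM A) = A := by
  ext i j; simp [conjM]

lemma conjM_one : conjM (1 : Matrix (Fin n) (Fin n) ℂ) = 1 := by
  ext i j; by_cases h : i = j <;> simp [conjM, Matrix.one_apply, h]

lemma conjM_smul (c : ℂ) (A : Matrix (Fin n) (Fin n) ℂ) :
    conjM (c • A) = (starRingEnd ℂ c) • conjM A := by
  ext i j; simp [conjM]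

lemma conjM_transpose (A : Matrix (Fin n) (Fin n) ℂ) : conjM (Aᵀ) = (conjM A)ᵀ := by
  ext i j; simp [conjM]

lemma transpose_conjM (A : Matrix (Fin n) (Fin n) ℂ) : (conjM A)ᵀ = Aᴴ := by
  ext i j; simp [conjM, Matrix.conjTranspose_apply]

lemma conjM_eq_conjTranspose_transpose (A : Matrix (Fin n) (Fin n) ℂ) : conjM A = (Aᴴ)ᵀ := by
  ext i j; simp [conjM, Matrix.conjTranspose_apply]

lemma conjM_inv (A : Matrix (Fin n) (Fin n) ℂ) : conjM (A⁻¹) = (conjM A)⁻¹ := by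
  rw [conjM_eq_conjTranspose_transpose, conjM_eq_conjTranspose_transpose,
    Matrix.conjTranspose_nonsing_inv, Matrix.transpose_nonsing_inv]

lemma conjM_det (A : Matrix (Fin n) (Fin n) ℂ) :
    (conjM A).det = starRingEnd ℂ A.det := by
  simpa [conjM] using (RingHom.map_det (starRingEnd ℂ) A).symm


/-! ### Group lemmas for Sp -/

lemma neg_one_blocks : (-1 : SpMat n) = fromBlocks (-1) 0 0 (-1) := by
  rw [← Matrix.fromBlocks_one, Matrix.fromBlocks_neg]; norm_num

lemma J_mul_J : _root_.J n * _root_.J n = -1 := by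
  rw [neg_one_blocks]
  simp [_root_.J, Matrix.fromBlocks_multiply]

lemma J_mul_negJ : _root_.J n * (-_root_.J n) = 1 := by
  rw [Matrix.mul_neg, J_mul_J, neg_neg]

lemma negJ_mul_J : (-_root_.J n) * _root_.J n = 1 := by
  rw [Matrix.neg_mul, J_mul_J, neg_neg]

lemma isUnit_J : IsUnit (_root_.J n) :=
  ⟨⟨_root_.J n, -_root_.J n, J_mul_negJ, negJ_mul_J⟩, rfl⟩

lemma isUnit_J_det : IsUnit (_root_.J n).det := (Matrix.isUnit_iff_isUnit_det _).mp isUnit_J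

lemma sp_det_isUnit {g : SpMat n} (hg : g ∈ Sp n) : IsUnit g.det := by
  have hd := congrArg Matrix.det hg
  rw [Matrix.det_mul, Matrix.det_mul, Matrix.det_transpose] at hd
  have h2 : (g.det * g.det - 1) * (_root_.J n).det = 0 := by ring_nf; linear_combination hd
  rcases mul_eq_zero.mp h2 with h | h
  · exact IsUnit.of_mul_eq_one g.det (by linarith)
  · exact absurd h isUnit_J_det.ne_zero

lemma sp_left_inv {g : SpMat n} (hg : g ∈ Sp n) : (-_root_.J n * gᵀ * _root_.J n) * g = 1 := by
  calc (-_root_.J n * gᵀ * _root_.J n) * g = -_root_.J n * (gᵀ * _root_.J n * g) := by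
        noncomm_ring
  _ = -_root_.J n * _root_.J n := by rw [hg]
  _ = 1 := negJ_mul_J

lemma sp_inv_eq {g : SpMat n} (hg : g ∈ Sp n) : g⁻¹ = -_root_.J n * gᵀ * _root_.J n :=
  Matrix.inv_eq_left_inv (sp_left_inv hg)

lemma sp_mul_inv {g : SpMat n} (hg : g ∈ Sp n) : g * g⁻¹ = 1 :=
  Matrix.mul_nonsing_inv _ (sp_det_isUnit hg)

lemma sp_inv_mul {g : SpMat n} (hg : g ∈ Sp n) : g⁻¹ * g = 1 :=
  Matrix.nonsing_inv_mul _ (sp_det_isUnit hg)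

lemma sp_other {g : SpMat n} (hg : g ∈ Sp n) : g * _root_.J n * gᵀ = _root_.J n := by
  have h := mul_eq_one_comm.mp (sp_left_inv hg)
  have h2 : g * -_root_.J n * gᵀ * (_root_.J n * -_root_.J n) = -_root_.J n := by
    calc g * -_root_.J n * gᵀ * (_root_.J n * -_root_.J n)
        = (g * (-_root_.J n * gᵀ * _root_.J n)) * -_root_.J n := by noncomm_ring
    _ = 1 * -_root_.J n := by rw [h]
    _ = -_root_.J n := one_mul _
  rw [J_mul_negJ, mul_one] at h2
  have h3 := congrArg Neg.neg h2
  simpa [Matrix.mul_neg, Matrix.neg_mul] using h3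

lemma sp_one_mem : (1 : SpMat n) ∈ Sp n := by simp [Sp]

lemma sp_mul_mem {g h : SpMat n} (hg : g ∈ Sp n) (hh : h ∈ Sp n) : g * h ∈ Sp n := by
  show (g * h)ᵀ * J n * (g * h) = J n
  rw [Matrix.transpose_mul]
  calc hᵀ * gᵀ * J n * (g * h) = hᵀ * (gᵀ * J n * g) * h := by noncomm_ring
  _ = hᵀ * J n * h := by rw [hg]
  _ = J n := hh

lemma sp_inv_mem {g : SpMat n} (hg : g ∈ Sp n) : g⁻¹ ∈ Sp n := by
  show (g⁻¹)ᵀ * _root_.J n * g⁻¹ = _root_.J n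
  rw [sp_inv_eq hg]
  have hJt : (_root_.J n)ᵀ = -_root_.J n := by
    simp [_root_.J, Matrix.fromBlocks_transpose, Matrix.fromBlocks_neg]
  have ht : (-_root_.J n * gᵀ * _root_.J n)ᵀ = -_root_.J n * g * _root_.J n := by
    simp only [Matrix.transpose_mul, Matrix.transpose_neg, hJt, Matrix.transpose_transpose,
      Matrix.neg_mul, Matrix.mul_neg, neg_neg]
    noncomm_ring
  rw [ht]
  calc -_root_.J n * g * _root_.J n * _root_.J n * (-_root_.J n * gᵀ * _root_.J n)
      = -_root_.J n * g * ((_root_.J n * _root_.J n) * -_root_.J n) * gᵀ * _root_.J n := by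
        noncomm_ring
  _ = -_root_.J n * (g * _root_.J n * gᵀ) * _root_.J n := by
        rw [J_mul_J, neg_one_mul, neg_neg]; noncomm_ring
  _ = -_root_.J n * _root_.J n * _root_.J n := by rw [sp_other hg]
  _ = _root_.J n := by rw [negJ_mul_J, one_mul]

lemma Iminus_mul_Iminus : Iminus n * Iminus n = 1 := by
  rw [← Matrix.fromBlocks_one]
  simp [Iminus, Matrix.fromBlocks_multiply]

lemma Iminus_transpose : (Iminus n)ᵀ = Iminus n := by
  simp [Iminus, Matrix.fromBlocks_transpose, Matrix.transpose_neg]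

lemma Iminus_J_Iminus : Iminus n * _root_.J n * Iminus n = -_root_.J n := by
  simp [Iminus, _root_.J, Matrix.fromBlocks_multiply, Matrix.fromBlocks_neg]

lemma tau_mul (g h : SpMat n) : tau (g * h) = tau g * tau h := by
  unfold tau
  calc Iminus n * (g * h) * Iminus n
      = Iminus n * g * (Iminus n * Iminus n) * h * Iminus n := by
        rw [Iminus_mul_Iminus]; noncomm_ring
  _ = Iminus n * g * Iminus n * (Iminus n * h * Iminus n) := by noncomm_ring

lemma tau_one : tau (1 : SpMat n) = 1 := by
  unfold tau; rw [mul_one, Iminus_mul_Iminus]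

lemma tau_tau (g : SpMat n) : tau (tau g) = g := by
  unfold tau
  calc Iminus n * (Iminus n * g * Iminus n) * Iminus n
      = (Iminus n * Iminus n) * g * (Iminus n * Iminus n) := by noncomm_ring
  _ = g := by rw [Iminus_mul_Iminus, one_mul, mul_one]

lemma tau_mem {g : SpMat n} (hg : g ∈ Sp n) : tau g ∈ Sp n := by
  show (tau g)ᵀ * _root_.J n * tau g = _root_.J n
  unfold tau
  have h1 : (Iminus n * g * Iminus n)ᵀ = Iminus n * gᵀ * Iminus n := by
    simp [Matrix.transpose_mul, Iminus_transpose, Matrix.mul_assoc]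
  rw [h1]
  have h2 : Iminus n * gᵀ * Iminus n * J n * (Iminus n * g * Iminus n)
      = Iminus n * (gᵀ * (Iminus n * J n * Iminus n) * g) * Iminus n := by noncomm_ring
  rw [h2, Iminus_J_Iminus]
  have h3 : gᵀ * -J n * g = -J n := by
    rw [Matrix.mul_neg, Matrix.neg_mul, hg]
  rw [h3]
  have := Iminus_J_Iminus (n := n)
  calc Iminus n * -J n * Iminus n = -(Iminus n * J n * Iminus n) := by
        rw [Matrix.mul_neg, Matrix.neg_mul]
  _ = J n := by rw [this, neg_neg]

lemma tau_inv {g : SpMat n} (hg : g ∈ Sp n) : tau (g⁻¹) = (tau g)⁻¹ := by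
  symm
  apply Matrix.inv_eq_right_inv
  rw [← tau_mul, sp_mul_inv hg, tau_one]


/-! ### Complex blocks and the action -/

def bA (g : SpMat n) : Matrix (Fin n) (Fin n) ℂ := cM g.toBlocks₁₁
def bB (g : SpMat n) : Matrix (Fin n) (Fin n) ℂ := cM g.toBlocks₁₂
def bC (g : SpMat n) : Matrix (Fin n) (Fin n) ℂ := cM g.toBlocks₂₁
def bD (g : SpMat n) : Matrix (Fin n) (Fin n) ℂ := cM g.toBlocks₂₂

def num (g : SpMat n) (Z : Matrix (Fin n) (Fin n) ℂ) := bA g * Z + bB g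
def den (g : SpMat n) (Z : Matrix (Fin n) (Fin n) ℂ) := bC g * Z + bD g

lemma act_eq (g : SpMat n) (Z : Matrix (Fin n) (Fin n) ℂ) :
    act g Z = num g Z * (den g Z)⁻¹ := rfl

def imP (Z : Matrix (Fin n) (Fin n) ℂ) : Matrix (Fin n) (Fin n) ℝ :=
  Matrix.of fun i j => (Z i j).im

def reP (Z : Matrix (Fin n) (Fin n) ℂ) : Matrix (Fin n) (Fin n) ℝ :=
  Matrix.of fun i j => (Z i j).re

lemma mem_siegel_iff (Z : Matrix (Fin n) (Fin n) ℂ) :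
    Z ∈ Siegel n ↔ Zᵀ = Z ∧ (imP Z).PosDef := Iff.rfl

lemma cM_sub (A B : Matrix (Fin n) (Fin n) ℝ) : cM (A - B) = cM A - cM B := by
  ext i j; simp [cM]

lemma cM_conjTranspose (A : Matrix (Fin n) (Fin n) ℝ) : (cM A)ᴴ = cM Aᵀ := by
  ext i j; simp [cM, Matrix.conjTranspose_apply, Complex.conj_ofReal]

/-- real relations for a symplectic matrix -/
lemma sp_rel {g : SpMat n} (hg : g ∈ Sp n) :
    (g.toBlocks₁₁)ᵀ * g.toBlocks₂₁ = (g.toBlocks₂₁)ᵀ * g.toBlocks₁₁ ∧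
    (g.toBlocks₁₂)ᵀ * g.toBlocks₂₂ = (g.toBlocks₂₂)ᵀ * g.toBlocks₁₂ ∧
    (g.toBlocks₁₁)ᵀ * g.toBlocks₂₂ - (g.toBlocks₂₁)ᵀ * g.toBlocks₁₂ = 1 := by
  have hg' : gᵀ * _root_.J n * g = _root_.J n := hg
  rw [← Matrix.fromBlocks_toBlocks g] at hg'
  set A := g.toBlocks₁₁; set B := g.toBlocks₁₂; set C := g.toBlocks₂₁; set D := g.toBlocks₂₂
  rw [Matrix.fromBlocks_transpose] at hg'
  unfold _root_.J at hg'
  rw [Matrix.fromBlocks_multiply, Matrix.fromBlocks_multiply] at hg'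
  rw [Matrix.fromBlocks_inj] at hg'
  obtain ⟨h11, h12, h21, h22⟩ := hg'
  simp only [Matrix.zero_mul, Matrix.neg_mul, zero_add, add_zero, Matrix.mul_one,
    Matrix.mul_neg, Matrix.mul_zero] at h11 h12 h21 h22
  refine ⟨?_, ?_, ?_⟩
  · exact (neg_add_eq_zero.mp h11).symm
  · exact (neg_add_eq_zero.mp h22).symm
  · rw [← h12]; abel

/-- complex relations for a symplectic matrix -/
lemma sp_crel {g : SpMat n} (hg : g ∈ Sp n) :
    (bA g)ᵀ * bC g = (bC g)ᵀ * bA g ∧ (bB g)ᵀ * bD g = (bD g)ᵀ * bB g ∧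
    (bA g)ᵀ * bD g - (bC g)ᵀ * bB g = 1 := by
  obtain ⟨h1, h2, h3⟩ := sp_rel hg
  refine ⟨?_, ?_, ?_⟩
  · simp only [bA, bC, ← cM_transpose, ← cM_mul]; rw [h1]
  · simp only [bB, bD, ← cM_transpose, ← cM_mul]; rw [h2]
  · simp only [bA, bB, bC, bD, ← cM_transpose, ← cM_mul, ← cM_sub]; rw [h3, cM_one]

section keyids

variable {a b c d Z Z' : Matrix (Fin n) (Fin n) ℂ}

lemma expand_aux (hZ : Zᵀ = Z) (hZ' : Z'ᵀ = Z') (p q r s : Matrix (Fin n) (Fin n) ℂ) :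
    (p * Z' + q)ᵀ * (r * Z + s) = Z' * (pᵀ * r) * Z + Z' * (pᵀ * s) + qᵀ * r * Z + qᵀ * s := by
  simp only [Matrix.transpose_add, Matrix.transpose_mul, hZ, hZ']
  noncomm_ring

lemma key_sym (hZ : Zᵀ = Z) (h1 : aᵀ * c = cᵀ * a) (h2 : bᵀ * d = dᵀ * b)
    (h3 : aᵀ * d - cᵀ * b = 1) :
    (a * Z + b)ᵀ * (c * Z + d) = (c * Z + d)ᵀ * (a * Z + b) := by
  have h4 : dᵀ * a - bᵀ * c = 1 := by
    have := congrArg Matrix.transpose h3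
    simpa [Matrix.transpose_sub, Matrix.transpose_mul] using this
  have e3 : aᵀ * d = 1 + cᵀ * b := by rw [← h3]; noncomm_ring
  have e4 : dᵀ * a = 1 + bᵀ * c := by rw [← h4]; noncomm_ring
  rw [expand_aux hZ hZ, expand_aux hZ hZ, h1, e3, e4, h2]
  noncomm_ring

lemma key_herm (hZ : Zᵀ = Z) (hZ' : Z'ᵀ = Z') (h1 : aᵀ * c = cᵀ * a) (h2 : bᵀ * d = dᵀ * b)
    (h3 : aᵀ * d - cᵀ * b = 1) :
    (c * Z' + d)ᵀ * (a * Z + b) - (a * Z' + b)ᵀ * (c * Z + d) = Z - Z' := by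
  have h4 : dᵀ * a - bᵀ * c = 1 := by
    have := congrArg Matrix.transpose h3
    simpa [Matrix.transpose_sub, Matrix.transpose_mul] using this
  have e3 : aᵀ * d = 1 + cᵀ * b := by rw [← h3]; noncomm_ring
  have e4 : dᵀ * a = 1 + bᵀ * c := by rw [← h4]; noncomm_ring
  rw [expand_aux hZ hZ', expand_aux hZ hZ', h1, e3, e4, h2]
  noncomm_ring

end keyids

lemma conjM_num (g : SpMat n) (Z : Matrix (Fin n) (Fin n) ℂ) :
    conjM (num g Z) = bA g * conjM Z + bB g := by
  rw [num, conjM_add, conjM_mul, bA, bB, conjM_cM, conjM_cM]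

lemma conjM_den (g : SpMat n) (Z : Matrix (Fin n) (Fin n) ℂ) :
    conjM (den g Z) = bC g * conjM Z + bD g := by
  rw [den, conjM_add, conjM_mul, bC, bD, conjM_cM, conjM_cM]

lemma conjM_Z_symm {Z : Matrix (Fin n) (Fin n) ℂ} (hZ : Zᵀ = Z) : (conjM Z)ᵀ = conjM Z := by
  rw [← conjM_transpose, hZ]

lemma sub_conjM (Z : Matrix (Fin n) (Fin n) ℂ) :
    Z - conjM Z = (2 * Complex.I) • cM (imP Z) := by
  ext i j
  simp only [Matrix.sub_apply, Matrix.smul_apply, conjM, cM, imP, Matrix.map_apply,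
    Matrix.of_apply, smul_eq_mul]
  rw [Complex.sub_conj]
  push_cast
  ring

/-- positive definiteness of `Bᴴ * B` for invertible `B` -/
lemma posDef_conjTranspose_mul_self {B : Matrix (Fin n) (Fin n) ℂ} (hB : IsUnit B.det) :
    (Bᴴ * B).PosDef := by
  refine Matrix.PosDef.of_dotProduct_mulVec_pos (Matrix.isHermitian_conjTranspose_mul_self B) fun x hx => ?_
  have hinj : Function.Injective B.mulVec :=
    Matrix.mulVec_injective_iff_isUnit.mpr ((Matrix.isUnit_iff_isUnit_det _).mpr hB)
  have hBx : B *ᵥ x ≠ 0 := by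
    intro h0
    exact hx (hinj (by rw [h0, Matrix.mulVec_zero]))
  have key : dotProduct (star x) ((Bᴴ * B) *ᵥ x) = dotProduct (star (B *ᵥ x)) (B *ᵥ x) := by
    rw [← Matrix.mulVec_mulVec, Matrix.dotProduct_mulVec, ← Matrix.star_mulVec]
  rw [key]
  exact dotProduct_star_self_pos_iff.mpr hBx

open scoped MatrixOrder in
def psqrt (Y : Matrix (Fin n) (Fin n) ℝ) : Matrix (Fin n) (Fin n) ℝ := CFC.sqrt Y

open scoped MatrixOrder in
lemma psqrt_mul_self {Y : Matrix (Fin n) (Fin n) ℝ} (hY : Y.PosSemidef) : psqrt Y * psqrt Y = Y :=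
  CFC.sqrt_mul_sqrt_self Y hY.nonneg

open scoped MatrixOrder in
lemma psqrt_isHermitian (Y : Matrix (Fin n) (Fin n) ℝ) : (psqrt Y).IsHermitian :=
  (Matrix.nonneg_iff_posSemidef.mp (CFC.sqrt_nonneg Y)).isHermitian

lemma posDef_cM {Y : Matrix (Fin n) (Fin n) ℝ} (hY : Y.PosDef) : (cM Y).PosDef := by
  set T := psqrt Y with hT
  have hT2 : T * T = Y := psqrt_mul_self hY.posSemidef
  have hTt : Tᵀ = T := by
    have := psqrt_isHermitian Y
    rwa [Matrix.IsHermitian, Matrix.conjTranspose_eq_transpose_of_trivial] at this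
  have hTdet : IsUnit T.det := by
    have h1 : T.det * T.det = Y.det := by rw [← Matrix.det_mul, hT2]
    have h2 : (0:ℝ) < Y.det := hY.det_pos
    have hne : T.det ≠ 0 := by
      intro h0
      rw [h0, mul_zero] at h1
      exact (ne_of_gt h2) h1.symm
    exact hne.isUnit
  have hfac : cM Y = (cM T)ᴴ * cM T := by
    rw [cM_conjTranspose, hTt, ← cM_mul, hT2]
  rw [hfac]
  apply posDef_conjTranspose_mul_self
  rw [cM_det]
  exact hTdet.map Complex.ofRealHom

lemma siegel_imP_posDef {Z : Matrix (Fin n) (Fin n) ℂ} (hZ : Z ∈ Siegel n) : (imP Z).PosDef :=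
  hZ.2

/-- invertibility of the denominator -/
lemma den_det_isUnit {g : SpMat n} {Z : Matrix (Fin n) (Fin n) ℂ}
    (hg : g ∈ Sp n) (hZ : Z ∈ Siegel n) : IsUnit (den g Z).det := by
  obtain ⟨h1, h2, h3⟩ := sp_crel hg
  have hZs : Zᵀ = Z := hZ.1
  have hZ's : (conjM Z)ᵀ = conjM Z := conjM_Z_symm hZs
  have hid := key_herm (a := bA g) (b := bB g) (c := bC g) (d := bD g) hZs hZ's h1 h2 h3
  have key : ∀ v, (den g Z) *ᵥ v = 0 → v = 0 := by
    intro v hv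
    by_contra hvne
    have hstep : dotProduct (star v) ((Z - conjM Z) *ᵥ v) = 0 := by
      rw [← hid]
      have hP : (bC g * conjM Z + bD g)ᵀ = (den g Z)ᴴ := by
        rw [← conjM_den, transpose_conjM]
      rw [Matrix.sub_mulVec, dotProduct_sub]
      have t1 : dotProduct (star v) (((bC g * conjM Z + bD g)ᵀ * (bA g * Z + bB g)) *ᵥ v) = 0 := by
        rw [hP, ← Matrix.mulVec_mulVec, Matrix.dotProduct_mulVec, ← Matrix.star_mulVec, hv]
        simp
      have t2 : dotProduct (star v) (((bA g * conjM Z + bB g)ᵀ * (bC g * Z + bD g)) *ᵥ v) = 0 := by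
        have : (bC g * Z + bD g) *ᵥ v = 0 := hv
        rw [← Matrix.mulVec_mulVec, this, Matrix.mulVec_zero, dotProduct_zero]
      rw [t1, t2, sub_zero]
    rw [sub_conjM, Matrix.smul_mulVec, dotProduct_smul, smul_eq_mul] at hstep
    have h2I : (2 * Complex.I) ≠ 0 := by simp [Complex.I_ne_zero]
    have hs0 : dotProduct (star v) (cM (imP Z) *ᵥ v) = 0 := by
      rcases mul_eq_zero.mp hstep with h | h
      · exact absurd h h2I
      · exact h
    have := (posDef_cM (siegel_imP_posDef hZ)).dotProduct_mulVec_pos hvne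
    rw [hs0] at this
    exact lt_irrefl 0 this
  have hinj : Function.Injective (den g Z).mulVec := by
    intro v w hvw
    have : (den g Z) *ᵥ (v - w) = 0 := by rw [Matrix.mulVec_sub, hvw, sub_self]
    exact sub_eq_zero.mp (key _ this)
  exact (Matrix.isUnit_iff_isUnit_det _).mp (Matrix.mulVec_injective_iff_isUnit.mp hinj)


/-! ### dot product re/im lemmas -/

def cv (x : Fin n → ℝ) : Fin n → ℂ := fun i => (x i : ℂ)

lemma star_cv (x : Fin n → ℝ) : star (cv x) = cv x := by
  ext i; simp [cv]

lemma cv_ne_zero {x : Fin n → ℝ} (hx : x ≠ 0) : cv x ≠ 0 := by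
  intro h
  apply hx
  ext i
  have h2 : (x i : ℂ) = 0 := congrFun h i
  exact_mod_cast h2

lemma dot_im (Mc : Matrix (Fin n) (Fin n) ℂ) (x : Fin n → ℝ) :
    (cv x ⬝ᵥ Mc *ᵥ cv x).im = x ⬝ᵥ imP Mc *ᵥ x := by
  simp only [dotProduct, Matrix.mulVec, Complex.im_sum, Complex.mul_im, cv, imP,
    Complex.ofReal_re, Complex.ofReal_im, Matrix.of_apply, Complex.re_sum, Complex.im_sum,
    zero_mul, add_zero, mul_zero, Finset.mul_sum]
  apply Finset.sum_congr rfl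
  intro i _
  apply Finset.sum_congr rfl
  intro j _
  ring

lemma dot_conjM (W : Matrix (Fin n) (Fin n) ℂ) (x : Fin n → ℝ) :
    cv x ⬝ᵥ (conjM W) *ᵥ cv x = starRingEnd ℂ (cv x ⬝ᵥ W *ᵥ cv x) := by
  simp only [dotProduct, Matrix.mulVec, conjM, Matrix.map_apply, cv, _root_.map_sum,
    _root_.map_mul, Complex.conj_ofReal]

/-! ### the action preserves Siegel space -/

lemma act_symm {g : SpMat n} {Z : Matrix (Fin n) (Fin n) ℂ} (hg : g ∈ Sp n)
    (hZ : Z ∈ Siegel n) : (act g Z)ᵀ = act g Z := by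
  obtain ⟨h1, h2, h3⟩ := sp_crel hg
  set N := num g Z
  set M := den g Z
  have hdet : IsUnit M.det := den_det_isUnit hg hZ
  have hkey : Nᵀ * M = Mᵀ * N := key_sym hZ.1 h1 h2 h3
  have hdt : IsUnit (Mᵀ).det := by rwa [Matrix.det_transpose]
  have hNt : Nᵀ = Mᵀ * (N * M⁻¹) := by
    calc Nᵀ = Nᵀ * (M * M⁻¹) := by rw [Matrix.mul_nonsing_inv _ hdet, mul_one]
    _ = (Nᵀ * M) * M⁻¹ := by rw [Matrix.mul_assoc]
    _ = (Mᵀ * N) * M⁻¹ := by rw [hkey]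
    _ = Mᵀ * (N * M⁻¹) := by rw [Matrix.mul_assoc]
  rw [act_eq, Matrix.transpose_mul, Matrix.transpose_nonsing_inv]
  rw [hNt, ← Matrix.mul_assoc, Matrix.nonsing_inv_mul _ hdt, one_mul]

lemma act_sub_conj {g : SpMat n} {Z : Matrix (Fin n) (Fin n) ℂ} (hg : g ∈ Sp n)
    (hZ : Z ∈ Siegel n) :
    act g Z - conjM (act g Z) =
      ((den g Z)ᴴ)⁻¹ * ((2 * Complex.I) • cM (imP Z)) * (den g Z)⁻¹ := by
  obtain ⟨h1, h2, h3⟩ := sp_crel hg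
  have hZs : Zᵀ = Z := hZ.1
  have hZ's : (conjM Z)ᵀ = conjM Z := conjM_Z_symm hZs
  set N := num g Z with hN
  set M := den g Z with hM
  have hdet : IsUnit M.det := den_det_isUnit hg hZ
  have hdetH : IsUnit (Mᴴ).det := by
    rw [Matrix.det_conjTranspose]
    exact hdet.map (starRingEnd ℂ)
  have hid : Mᴴ * N - (conjM N)ᵀ * M = (2 * Complex.I) • cM (imP Z) := by
    have hkh := key_herm (a := bA g) (b := bB g) (c := bC g) (d := bD g) hZs hZ's h1 h2 h3
    have e1 : bC g * conjM Z + bD g = conjM M := (conjM_den g Z).symm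
    have e2 : bA g * conjM Z + bB g = conjM N := (conjM_num g Z).symm
    rw [e1, e2, transpose_conjM, transpose_conjM] at hkh
    have : (conjM N)ᵀ = Nᴴ := transpose_conjM N
    rw [this, ← sub_conjM]
    exact hkh
  have hWsym : (N * M⁻¹)ᵀ = N * M⁻¹ := act_symm hg hZ
  have hcWt : (Mᴴ)⁻¹ * (conjM N)ᵀ = conjM (N * M⁻¹) := by
    calc (Mᴴ)⁻¹ * (conjM N)ᵀ
        = ((conjM M)⁻¹)ᵀ * (conjM N)ᵀ := by
          rw [← transpose_conjM M, ← Matrix.transpose_nonsing_inv]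
    _ = ((conjM N) * (conjM M)⁻¹)ᵀ := (Matrix.transpose_mul _ _).symm
    _ = (conjM (N * M⁻¹))ᵀ := by rw [conjM_mul, conjM_inv]
    _ = conjM ((N * M⁻¹)ᵀ) := (conjM_transpose _).symm
    _ = conjM (N * M⁻¹) := by rw [hWsym]
  calc N * M⁻¹ - conjM (N * M⁻¹)
      = (Mᴴ)⁻¹ * (Mᴴ * N) * M⁻¹ - (Mᴴ)⁻¹ * (conjM N)ᵀ * (M * M⁻¹) := by
        rw [← Matrix.mul_assoc, Matrix.nonsing_inv_mul _ hdetH, one_mul,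
          Matrix.mul_nonsing_inv _ hdet, mul_one, hcWt]
  _ = (Mᴴ)⁻¹ * (Mᴴ * N - (conjM N)ᵀ * M) * M⁻¹ := by
        rw [Matrix.mul_sub, Matrix.sub_mul]
        congr 1 <;> noncomm_ring
  _ = (Mᴴ)⁻¹ * ((2 * Complex.I) • cM (imP Z)) * M⁻¹ := by rw [hid]

lemma act_mem {g : SpMat n} {Z : Matrix (Fin n) (Fin n) ℂ} (hg : g ∈ Sp n)
    (hZ : Z ∈ Siegel n) : act g Z ∈ Siegel n := by
  rw [mem_siegel_iff]
  refine ⟨act_symm hg hZ, ?_⟩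
  set W := act g Z with hW
  set M := den g Z with hM
  have hdet : IsUnit M.det := den_det_isUnit hg hZ
  refine Matrix.PosDef.of_dotProduct_mulVec_pos ?_ ?_
  · show (imP W)ᴴ = imP W
    rw [Matrix.conjTranspose_eq_transpose_of_trivial]
    ext i j
    have h4 := congrFun (congrFun (act_symm hg hZ) j) i
    rw [Matrix.transpose_apply] at h4
    simp only [imP, Matrix.of_apply, Matrix.transpose_apply]
    show (act g Z j i).im = (act g Z i j).im
    rw [h4]
  · intro x hx
    have hcvx : cv x ≠ 0 := cv_ne_zero hx
    set u := M⁻¹ *ᵥ cv x with hu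
    have hune : u ≠ 0 := by
      intro h0
      apply hcvx
      have : M *ᵥ u = cv x := by
        rw [hu, Matrix.mulVec_mulVec, Matrix.mul_nonsing_inv _ hdet, Matrix.one_mulVec]
      rw [h0, Matrix.mulVec_zero] at this
      exact this.symm
    set s := star u ⬝ᵥ (cM (imP Z)) *ᵥ u with hs
    have hspos : 0 < s := (posDef_cM (siegel_imP_posDef hZ)).dotProduct_mulVec_pos hune
    set z := cv x ⬝ᵥ W *ᵥ cv x with hz
    have step1 : z - starRingEnd ℂ z = cv x ⬝ᵥ (W - conjM W) *ᵥ cv x := by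
      rw [Matrix.sub_mulVec, dotProduct_sub, ← dot_conjM]
    have step2 : cv x ⬝ᵥ (W - conjM W) *ᵥ cv x = (2 * Complex.I) * s := by
      have e1 : (Mᴴ)⁻¹ = (M⁻¹)ᴴ := (Matrix.conjTranspose_nonsing_inv M).symm
      have e2 : ∀ w, cv x ⬝ᵥ ((M⁻¹)ᴴ *ᵥ w) = star (M⁻¹ *ᵥ cv x) ⬝ᵥ w := by
        intro w
        conv_lhs => rw [← star_cv x]
        rw [Matrix.dotProduct_mulVec, ← Matrix.star_mulVec]
      rw [hW, act_sub_conj hg hZ, ← hM, ← Matrix.mulVec_mulVec, ← Matrix.mulVec_mulVec, e1,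
        e2, Matrix.smul_mulVec, dotProduct_smul, smul_eq_mul, hs, hu]
    have him : (z.im : ℂ) = s := by
      have e3 : (2 * z.im : ℝ) * Complex.I = (2 * Complex.I) * s := by
        rw [← Complex.sub_conj, step1, step2]
      have h2I : (2 * Complex.I) ≠ 0 := by simp [Complex.I_ne_zero]
      apply mul_left_cancel₀ h2I
      rw [← e3]
      push_cast
      ring
    have hzim : 0 < z.im := by
      have : (0:ℂ) < (z.im : ℂ) := by rw [him]; exact hspos
      exact_mod_cast this
    show 0 < star x ⬝ᵥ (imP W) *ᵥ x
    have hsx : star x = x := by ext i; simp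
    rw [hsx, ← dot_im]
    exact hzim

/-! ### cocycle property of the action -/

lemma blocks_mul (M P : SpMat n) : M * P = fromBlocks
    (M.toBlocks₁₁ * P.toBlocks₁₁ + M.toBlocks₁₂ * P.toBlocks₂₁)
    (M.toBlocks₁₁ * P.toBlocks₁₂ + M.toBlocks₁₂ * P.toBlocks₂₂)
    (M.toBlocks₂₁ * P.toBlocks₁₁ + M.toBlocks₂₂ * P.toBlocks₂₁)
    (M.toBlocks₂₁ * P.toBlocks₁₂ + M.toBlocks₂₂ * P.toBlocks₂₂) := by
  conv_lhs => rw [← Matrix.fromBlocks_toBlocks M, ← Matrix.fromBlocks_toBlocks P]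
  rw [Matrix.fromBlocks_multiply]

lemma bA_mul (g g' : SpMat n) : bA (g * g') = bA g * bA g' + bB g * bC g' := by
  unfold bA bB bC
  rw [blocks_mul, Matrix.toBlocks_fromBlocks₁₁, cM_add, cM_mul, cM_mul]

lemma bB_mul (g g' : SpMat n) : bB (g * g') = bA g * bB g' + bB g * bD g' := by
  unfold bA bB bD
  rw [blocks_mul, Matrix.toBlocks_fromBlocks₁₂, cM_add, cM_mul, cM_mul]

lemma bC_mul (g g' : SpMat n) : bC (g * g') = bC g * bA g' + bD g * bC g' := by
  unfold bA bC bD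
  rw [blocks_mul, Matrix.toBlocks_fromBlocks₂₁, cM_add, cM_mul, cM_mul]

lemma bD_mul (g g' : SpMat n) : bD (g * g') = bC g * bB g' + bD g * bD g' := by
  unfold bB bC bD
  rw [blocks_mul, Matrix.toBlocks_fromBlocks₂₂, cM_add, cM_mul, cM_mul]

lemma act_one (Z : Matrix (Fin n) (Fin n) ℂ) : act 1 Z = Z := by
  rw [act_eq, num, den]
  have h1 : (1 : SpMat n) = fromBlocks 1 0 0 1 := Matrix.fromBlocks_one.symm
  have e1 : bA (1 : SpMat n) = 1 := by
    unfold bA; rw [h1, Matrix.toBlocks_fromBlocks₁₁, cM_one]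
  have e2 : bB (1 : SpMat n) = 0 := by
    unfold bB; rw [h1, Matrix.toBlocks_fromBlocks₁₂, cM_zero]
  have e3 : bC (1 : SpMat n) = 0 := by
    unfold bC; rw [h1, Matrix.toBlocks_fromBlocks₂₁, cM_zero]
  have e4 : bD (1 : SpMat n) = 1 := by
    unfold bD; rw [h1, Matrix.toBlocks_fromBlocks₂₂, cM_one]
  rw [e1, e2, e3, e4]
  simp

lemma act_mul {g g' : SpMat n} {Z : Matrix (Fin n) (Fin n) ℂ} (hg : g ∈ Sp n)
    (hg' : g' ∈ Sp n) (hZ : Z ∈ Siegel n) : act (g * g') Z = act g (act g' Z) := by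
  set N' := num g' Z with hN'
  set M' := den g' Z with hM'
  have hM'det : IsUnit M'.det := den_det_isUnit hg' hZ
  have hN2 : num (g * g') Z = bA g * N' + bB g * M' := by
    rw [num, bA_mul, bB_mul, hN', hM', num, den]
    noncomm_ring
  have hD2 : den (g * g') Z = bC g * N' + bD g * M' := by
    rw [den, bC_mul, bD_mul, hN', hM', num, den]
    noncomm_ring
  have hD2det : IsUnit (den (g * g') Z).det := den_det_isUnit (sp_mul_mem hg hg') hZ
  have hnum : num g (act g' Z) = (bA g * N' + bB g * M') * M'⁻¹ := by
    rw [num, act_eq, ← hN', ← hM', Matrix.add_mul]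
    rw [Matrix.mul_assoc (bB g), Matrix.mul_nonsing_inv _ hM'det, mul_one, Matrix.mul_assoc]
  have hden : den g (act g' Z) = (bC g * N' + bD g * M') * M'⁻¹ := by
    rw [den, act_eq, ← hN', ← hM', Matrix.add_mul]
    rw [Matrix.mul_assoc (bD g), Matrix.mul_nonsing_inv _ hM'det, mul_one, Matrix.mul_assoc]
  rw [act_eq g (act g' Z), hnum, hden, Matrix.mul_inv_rev,
    Matrix.nonsing_inv_nonsing_inv _ hM'det]
  symm
  calc (bA g * N' + bB g * M') * M'⁻¹ * (M' * (bC g * N' + bD g * M')⁻¹)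
      = (bA g * N' + bB g * M') * (M'⁻¹ * M') * (bC g * N' + bD g * M')⁻¹ := by
        noncomm_ring
  _ = (bA g * N' + bB g * M') * (bC g * N' + bD g * M')⁻¹ := by
        rw [Matrix.nonsing_inv_mul _ hM'det, mul_one]
  _ = act (g * g') Z := by rw [act_eq, hN2, hD2]

/-! ### equivariance with respect to tau and conjugation -/

lemma tau_blocks (g : SpMat n) : tau g = fromBlocks g.toBlocks₁₁ (-g.toBlocks₁₂)
    (-g.toBlocks₂₁) g.toBlocks₂₂ := by
  unfold tau Iminus
  conv_lhs => rw [← Matrix.fromBlocks_toBlocks g]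
  rw [Matrix.fromBlocks_multiply, Matrix.fromBlocks_multiply]
  congr 1 <;> first
    | (simp [Matrix.neg_mul, Matrix.mul_neg])
    | skip
  all_goals simp [Matrix.neg_mul, Matrix.mul_neg]

lemma bA_tau (g : SpMat n) : bA (tau g) = bA g := by
  unfold bA; rw [tau_blocks, Matrix.toBlocks_fromBlocks₁₁]

lemma bB_tau (g : SpMat n) : bB (tau g) = -bB g := by
  unfold bB; rw [tau_blocks, Matrix.toBlocks_fromBlocks₁₂, cM_neg]

lemma bC_tau (g : SpMat n) : bC (tau g) = -bC g := by
  unfold bC; rw [tau_blocks, Matrix.toBlocks_fromBlocks₂₁, cM_neg]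

lemma bD_tau (g : SpMat n) : bD (tau g) = bD g := by
  unfold bD; rw [tau_blocks, Matrix.toBlocks_fromBlocks₂₂]

lemma act_tau_conj (g : SpMat n) (Z : Matrix (Fin n) (Fin n) ℂ) :
    act (tau g) (-(conjM Z)) = -(conjM (act g Z)) := by
  rw [act_eq, num, den, bA_tau, bB_tau, bC_tau, bD_tau]
  have e1 : bA g * -conjM Z + -bB g = -(bA g * conjM Z + bB g) := by noncomm_ring
  have e2 : -bC g * -conjM Z + bD g = bC g * conjM Z + bD g := by noncomm_ring
  rw [e1, e2, ← conjM_num, ← conjM_den, act_eq, conjM_mul, conjM_inv, Matrix.neg_mul]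

/-! ### the base point iI -/

def iOne : Matrix (Fin n) (Fin n) ℂ := Complex.I • 1

lemma iOne_symm : (iOne (n := n))ᵀ = iOne := by
  rw [iOne, Matrix.transpose_smul, Matrix.transpose_one]

lemma imP_iOne : imP (iOne (n := n)) = 1 := by
  ext i j
  by_cases h : i = j <;>
    simp [imP, iOne, Matrix.one_apply, h]

lemma iOne_mem : iOne ∈ Siegel n := by
  rw [mem_siegel_iff]
  exact ⟨iOne_symm, by rw [imP_iOne]; exact Matrix.PosDef.one⟩

lemma neg_conjM_iOne : -(conjM (iOne (n := n))) = iOne := by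
  ext i j
  by_cases h : i = j <;>
    simp [conjM, iOne, Matrix.one_apply, h]

/-! ### forward direction -/

lemma coboundary_to_point {γ : SpMat n} (h : SpMat n) (hh : h ∈ Sp n)
    (hγ : γ = tau h * h⁻¹) : ∃ Z ∈ Siegel n, act γ Z = -(conjM Z) := by
  refine ⟨act h iOne, act_mem hh iOne_mem, ?_⟩
  have h1 : act γ (act h iOne) = act (tau h) (act h⁻¹ (act h iOne)) := by
    rw [hγ]
    exact act_mul (tau_mem hh) (sp_inv_mem hh) (act_mem hh iOne_mem)
  have h2 : act h⁻¹ (act h iOne) = iOne := by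
    rw [← act_mul (sp_inv_mem hh) hh iOne_mem, sp_inv_mul hh, act_one]
  have h3 : act (tau h) iOne = act (tau h) (-(conjM iOne)) := by rw [neg_conjM_iOne]
  rw [h1, h2, h3, act_tau_conj]




/-! ### dot_re -/

lemma dot_re (Mc : Matrix (Fin n) (Fin n) ℂ) (x : Fin n → ℝ) :
    (cv x ⬝ᵥ Mc *ᵥ cv x).re = x ⬝ᵥ reP Mc *ᵥ x := by
  simp only [dotProduct, Matrix.mulVec, Complex.re_sum, Complex.mul_re, cv, reP,
    Complex.ofReal_re, Complex.ofReal_im, Matrix.of_apply, Complex.im_sum,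
    zero_mul, sub_zero, mul_zero, Finset.mul_sum]
  try (apply Finset.sum_congr rfl; intro i _; apply Finset.sum_congr rfl; intro j _; ring)

/-! ### Hilbert 90 for unitary matrices -/

lemma cM_reP_of_selfconj {M : Matrix (Fin n) (Fin n) ℂ} (h : conjM M = M) :
    cM (reP M) = M := by
  ext i j
  have he : starRingEnd ℂ (M i j) = M i j := congrFun (congrFun h i) j
  have him : (M i j).im = 0 := Complex.conj_eq_iff_im.mp he
  apply Complex.ext
  · simp [cM, reP]
  · simp [cM, reP, him]

lemma conjM_conjTranspose (V : Matrix (Fin n) (Fin n) ℂ) : conjM (Vᴴ) = Vᵀ := by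
  ext i j
  simp [conjM, Matrix.conjTranspose_apply]

lemma hilbert90 {U : Matrix (Fin n) (Fin n) ℂ} (hU : Uᴴ * U = 1) (hUc : U * conjM U = 1) :
    ∃ W : Matrix (Fin n) (Fin n) ℂ, Wᴴ * W = 1 ∧ conjM W * W⁻¹ = U := by
  classical
  have hUdet : IsUnit U.det := by
    apply IsUnit.of_mul_eq_one (conjM U).det
    rw [← Matrix.det_mul, hUc, Matrix.det_one]
  have hcU : conjM U * U = 1 := mul_eq_one_comm.mp hUc
  have hUH : Uᴴ = conjM U := by
    have e1 : U⁻¹ = Uᴴ := Matrix.inv_eq_left_inv hU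
    have e2 : U⁻¹ = conjM U := Matrix.inv_eq_left_inv hcU
    rw [← e1, e2]
  have hUt : Uᵀ = U := by
    have := congrArg conjM hUH
    rwa [conjM_conjTranspose, conjM_conjM] at this
  -- find a good parameter t
  obtain ⟨t, ht⟩ : ∃ t : ℝ, ((1 - Complex.I * t) • (1 : Matrix (Fin n) (Fin n) ℂ)
      + (1 + Complex.I * t) • conjM U).det ≠ 0 := by
    set p : Polynomial ℂ :=
      ((Polynomial.C 1 - Polynomial.C Complex.I * Polynomial.X) •
        (1 : Matrix (Fin n) (Fin n) (Polynomial ℂ))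
        + (Polynomial.C 1 + Polynomial.C Complex.I * Polynomial.X) •
          (conjM U).map Polynomial.C).det with hp
    have heval : ∀ w : ℂ, p.eval w = ((1 - Complex.I * w) • (1 : Matrix (Fin n) (Fin n) ℂ)
        + (1 + Complex.I * w) • conjM U).det := by
      intro w
      rw [hp]
      rw [show Polynomial.eval w = (Polynomial.evalRingHom w : Polynomial ℂ → ℂ) from rfl]
      rw [RingHom.map_det]
      congr 1
      ext i j
      rw [RingHom.mapMatrix_apply]
      by_cases hij : i = j <;>
        simp [Matrix.map_apply, Matrix.add_apply, Matrix.smul_apply, Matrix.one_apply, hij,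
          smul_eq_mul]
    have hpne : p ≠ 0 := by
      intro h0
      have := heval Complex.I
      rw [h0] at this
      simp only [Polynomial.eval_zero] at this
      have h2 : ((1 - Complex.I * Complex.I) • (1 : Matrix (Fin n) (Fin n) ℂ)
          + (1 + Complex.I * Complex.I) • conjM U) = (2 : ℂ) • 1 := by
        rw [Complex.I_mul_I]
        norm_num
      rw [h2, Matrix.det_smul, Matrix.det_one] at this
      rw [mul_one] at this
      exact (pow_ne_zero _ (two_ne_zero)) this.symm
    by_contra hall
    push_neg at hall
    have hsub : Set.range (fun t : ℝ => (t : ℂ)) ⊆ {x | Polynomial.IsRoot p x} := by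
      rintro _ ⟨t, rfl⟩
      have := hall t
      rw [← heval] at this
      simpa [Polynomial.IsRoot] using this
    exact Set.infinite_range_of_injective Complex.ofReal_injective
      ((Polynomial.finite_setOf_isRoot hpne).subset hsub)
  set c : ℂ := 1 + Complex.I * t with hcdef
  have hcbar : starRingEnd ℂ c = 1 - Complex.I * t := by
    rw [hcdef]
    simp [Complex.ext_iff]
  set V : Matrix (Fin n) (Fin n) ℂ :=
    (1 - Complex.I * t) • (1 : Matrix (Fin n) (Fin n) ℂ) + c • conjM U with hVdef
  have hVdet : IsUnit V.det := isUnit_iff_ne_zero.mpr ht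
  have hcbar2 : starRingEnd ℂ (1 - Complex.I * t) = c := by
    rw [hcdef]
    simp [Complex.ext_iff]
  have hVbar : conjM V = U * V := by
    rw [hVdef, conjM_add, conjM_smul, conjM_smul, conjM_one, conjM_conjM, hcbar, hcbar2]
    rw [Matrix.mul_add, Matrix.mul_smul, Matrix.mul_smul, Matrix.mul_one, hUc]
    abel
  have hVH : Vᴴ = Vᵀ * U := by
    have h1 : Vᴴ = (conjM V)ᵀ := (transpose_conjM V).symm
    rw [h1, hVbar, Matrix.transpose_mul, hUt]
  have hherm : conjM (Vᴴ * V) = Vᴴ * V := by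
    rw [conjM_mul, conjM_conjTranspose, hVbar, hVH]
    rw [← Matrix.mul_assoc]
  set R : Matrix (Fin n) (Fin n) ℝ := reP (Vᴴ * V) with hRdef
  have hRc : cM R = Vᴴ * V := cM_reP_of_selfconj hherm
  have hRsym : Rᵀ = R := by
    have hh : (Vᴴ * V)ᴴ = Vᴴ * V := Matrix.isHermitian_conjTranspose_mul_self V
    ext i j
    have he : starRingEnd ℂ ((Vᴴ * V) j i) = (Vᴴ * V) i j := by
      have := congrFun (congrFun hh i) j
      rwa [Matrix.conjTranspose_apply] at this
    simp only [hRdef, reP, Matrix.transpose_apply, Matrix.of_apply]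
    rw [← he]
    simp
  have hRpd : R.PosDef := by
    refine Matrix.PosDef.of_dotProduct_mulVec_pos ?_ ?_
    · show Rᴴ = R
      rwa [Matrix.conjTranspose_eq_transpose_of_trivial]
    · intro x hx
      have hcvx : cv x ≠ 0 := cv_ne_zero hx
      have hpos := (posDef_conjTranspose_mul_self hVdet).dotProduct_mulVec_pos hcvx
      rw [star_cv] at hpos
      have hre : 0 < (cv x ⬝ᵥ (Vᴴ * V) *ᵥ cv x).re := by
        have := (Complex.lt_def.mp hpos).1
        simpa using this
      rw [dot_re] at hre
      have hsx : star x = x := by ext i; simp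
      rw [hsx]
      exact hre
  set S : Matrix (Fin n) (Fin n) ℝ := psqrt R with hSdef
  have hS2 : S * S = R := psqrt_mul_self hRpd.posSemidef
  have hSsym : Sᵀ = S := by
    have := psqrt_isHermitian R
    rwa [Matrix.IsHermitian, Matrix.conjTranspose_eq_transpose_of_trivial] at this
  have hSdet : IsUnit S.det := by
    have h1 : S.det * S.det = R.det := by rw [← Matrix.det_mul, hS2]
    have h2 : (0:ℝ) < R.det := hRpd.det_pos
    have hne : S.det ≠ 0 := by
      intro h0
      rw [h0, mul_zero] at h1
      exact (ne_of_gt h2) h1.symm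
    exact hne.isUnit
  have hcmSdet : IsUnit (cM S).det := by
    rw [cM_det]; exact hSdet.map Complex.ofRealHom
  have hcmSH : (cM S)ᴴ = cM S := by rw [cM_conjTranspose, hSsym]
  have hcmS2 : cM S * cM S = Vᴴ * V := by rw [← cM_mul, hS2, hRc]
  refine ⟨V * (cM S)⁻¹, ?_, ?_⟩
  · rw [Matrix.conjTranspose_mul, Matrix.conjTranspose_nonsing_inv, hcmSH]
    calc (cM S)⁻¹ * Vᴴ * (V * (cM S)⁻¹)
        = (cM S)⁻¹ * (Vᴴ * V) * (cM S)⁻¹ := by noncomm_ring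
    _ = (cM S)⁻¹ * (cM S * cM S) * (cM S)⁻¹ := by rw [hcmS2]
    _ = ((cM S)⁻¹ * cM S) * (cM S * (cM S)⁻¹) := by noncomm_ring
    _ = 1 := by
        rw [Matrix.nonsing_inv_mul _ hcmSdet, Matrix.mul_nonsing_inv _ hcmSdet, one_mul]
  · rw [conjM_mul, conjM_inv, conjM_cM, hVbar, Matrix.mul_inv_rev,
      Matrix.nonsing_inv_nonsing_inv _ hcmSdet]
    calc U * V * (cM S)⁻¹ * (cM S * V⁻¹)
        = U * V * ((cM S)⁻¹ * cM S) * V⁻¹ := by noncomm_ring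
    _ = U * (V * V⁻¹) := by rw [Matrix.nonsing_inv_mul _ hcmSdet]; noncomm_ring
    _ = U := by rw [Matrix.mul_nonsing_inv _ hVdet, mul_one]


/-! ### the embedding of U(n) -/

def psi (W : Matrix (Fin n) (Fin n) ℂ) : SpMat n :=
  fromBlocks (reP W) (imP W) (-(imP W)) (reP W)

lemma reP_mul (W₁ W₂ : Matrix (Fin n) (Fin n) ℂ) :
    reP (W₁ * W₂) = reP W₁ * reP W₂ - imP W₁ * imP W₂ := by
  ext i j
  simp only [reP, imP, Matrix.of_apply, Matrix.mul_apply, Matrix.sub_apply, Complex.re_sum,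
    Complex.mul_re, Finset.sum_sub_distrib]

lemma imP_mul (W₁ W₂ : Matrix (Fin n) (Fin n) ℂ) :
    imP (W₁ * W₂) = reP W₁ * imP W₂ + imP W₁ * reP W₂ := by
  ext i j
  simp only [reP, imP, Matrix.of_apply, Matrix.mul_apply, Matrix.add_apply, Complex.im_sum,
    Complex.mul_im, Finset.sum_add_distrib]

lemma reP_one : reP (1 : Matrix (Fin n) (Fin n) ℂ) = 1 := by
  ext i j; by_cases h : i = j <;> simp [reP, Matrix.one_apply, h]

lemma imP_one : imP (1 : Matrix (Fin n) (Fin n) ℂ) = 0 := by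
  ext i j; by_cases h : i = j <;> simp [imP, Matrix.one_apply, h]

lemma psi_one : psi (1 : Matrix (Fin n) (Fin n) ℂ) = 1 := by
  rw [psi, reP_one, imP_one, neg_zero, Matrix.fromBlocks_one]

lemma psi_mul (W₁ W₂ : Matrix (Fin n) (Fin n) ℂ) : psi (W₁ * W₂) = psi W₁ * psi W₂ := by
  rw [psi, psi, psi, Matrix.fromBlocks_multiply, reP_mul, imP_mul, Matrix.fromBlocks_inj]
  refine ⟨by noncomm_ring, by noncomm_ring, by noncomm_ring, by noncomm_ring⟩

lemma unitary_rel {W : Matrix (Fin n) (Fin n) ℂ} (hW : Wᴴ * W = 1) :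
    (reP W)ᵀ * reP W + (imP W)ᵀ * imP W = 1 ∧
    (reP W)ᵀ * imP W = (imP W)ᵀ * reP W := by
  constructor <;> ext i j
  · have h := congrFun (congrFun hW i) j
    have hre := congrArg Complex.re h
    simp only [Matrix.mul_apply, Matrix.conjTranspose_apply, Complex.re_sum, Complex.mul_re,
      RCLike.star_def, Complex.conj_re, Complex.conj_im, neg_mul, sub_neg_eq_add] at hre
    simp only [Matrix.add_apply, Matrix.mul_apply, Matrix.transpose_apply, reP, imP,
      Matrix.of_apply]
    rw [← Finset.sum_add_distrib]
    rw [hre]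
    by_cases hij : i = j <;> simp [Matrix.one_apply, hij]
  · have h := congrFun (congrFun hW i) j
    have him := congrArg Complex.im h
    simp only [Matrix.mul_apply, Matrix.conjTranspose_apply, Complex.im_sum, Complex.mul_im,
      RCLike.star_def, Complex.conj_re, Complex.conj_im, neg_mul] at him
    have h1 : ((1 : Matrix (Fin n) (Fin n) ℂ) i j).im = 0 := by
      by_cases hij : i = j <;> simp [Matrix.one_apply, hij]
    rw [h1, Finset.sum_add_distrib, Finset.sum_neg_distrib] at him
    simp only [Matrix.mul_apply, Matrix.transpose_apply, reP, imP, Matrix.of_apply]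
    linarith [him]

lemma unitary_det {W : Matrix (Fin n) (Fin n) ℂ} (hW : Wᴴ * W = 1) : IsUnit W.det := by
  apply IsUnit.of_mul_eq_one (Wᴴ).det
  rw [mul_comm, ← Matrix.det_mul, hW, Matrix.det_one]

lemma psi_sp {W : Matrix (Fin n) (Fin n) ℂ} (hW : Wᴴ * W = 1) : psi W ∈ Sp n := by
  obtain ⟨h1, h2⟩ := unitary_rel hW
  show (psi W)ᵀ * _root_.J n * psi W = _root_.J n
  unfold _root_.J
  rw [psi, Matrix.fromBlocks_transpose, Matrix.transpose_neg, Matrix.fromBlocks_multiply,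
    Matrix.fromBlocks_multiply, Matrix.fromBlocks_inj]
  set R := reP W
  set Im := imP W
  simp only [Matrix.mul_zero, Matrix.mul_one, Matrix.mul_neg, Matrix.zero_mul,
    Matrix.neg_mul, zero_add, add_zero, zero_sub, neg_neg]
  refine ⟨?_, ?_, ?_, ?_⟩
  · rw [← h2]; abel
  · rw [← h1]; abel
  · rw [← h1]; abel
  · rw [← h2]; abel

lemma psi_inv {W : Matrix (Fin n) (Fin n) ℂ} (hW : Wᴴ * W = 1) :
    (psi W)⁻¹ = psi (W⁻¹) := by
  apply Matrix.inv_eq_right_inv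
  rw [← psi_mul, Matrix.mul_nonsing_inv _ (unitary_det hW), psi_one]

lemma reP_conjM (W : Matrix (Fin n) (Fin n) ℂ) : reP (conjM W) = reP W := by
  ext i j; simp [reP, conjM]

lemma imP_conjM (W : Matrix (Fin n) (Fin n) ℂ) : imP (conjM W) = -(imP W) := by
  ext i j; simp [imP, conjM]

lemma tau_psi (W : Matrix (Fin n) (Fin n) ℂ) : tau (psi W) = psi (conjM W) := by
  rw [tau_blocks (psi W), psi, Matrix.toBlocks_fromBlocks₁₁, Matrix.toBlocks_fromBlocks₁₂,
    Matrix.toBlocks_fromBlocks₂₁, Matrix.toBlocks_fromBlocks₂₂, psi, reP_conjM, imP_conjM,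
    neg_neg]

lemma reP_decomp (A B : Matrix (Fin n) (Fin n) ℝ) :
    reP (cM A + Complex.I • cM B) = A := by
  ext i j
  simp [reP, cM, Complex.mul_re]

lemma imP_decomp (A B : Matrix (Fin n) (Fin n) ℝ) :
    imP (cM A + Complex.I • cM B) = B := by
  ext i j
  simp [imP, cM, Complex.mul_im]

lemma Z_decomp (Z : Matrix (Fin n) (Fin n) ℂ) :
    Z = cM (reP Z) + Complex.I • cM (imP Z) := by
  ext i j
  apply Complex.ext
  · simp [reP, cM, Complex.mul_re]
  · simp [imP, cM, Complex.mul_im]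

lemma mulUU (P Q R S : Matrix (Fin n) (Fin n) ℂ) :
    (P + Complex.I • Q) * (R + Complex.I • S)
      = (P * R - Q * S) + Complex.I • (P * S + Q * R) := by
  have hQS : (Complex.I • Q) * (Complex.I • S) = -(Q * S) := by
    rw [smul_mul_assoc, mul_smul_comm, smul_smul, Complex.I_mul_I, neg_smul, one_smul]
  rw [Matrix.add_mul, Matrix.mul_add, Matrix.mul_add, hQS, smul_mul_assoc, mul_smul_comm,
    smul_add]
  abel

/-! ### the base point construction h₀ -/

lemma exists_h0 {Z : Matrix (Fin n) (Fin n) ℂ} (hZ : Z ∈ Siegel n) :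
    ∃ h₀ ∈ Sp n, act h₀ iOne = Z := by
  classical
  have hZs : Zᵀ = Z := hZ.1
  set X := reP Z with hX
  set Y := imP Z with hY
  have hXsym : Xᵀ = X := by
    ext i j
    have := congrFun (congrFun hZs i) j
    rw [Matrix.transpose_apply] at this
    simp only [hX, reP, Matrix.transpose_apply, Matrix.of_apply]
    rw [this]
  have hYpd : Y.PosDef := siegel_imP_posDef hZ
  set S : Matrix (Fin n) (Fin n) ℝ := psqrt Y with hSdef
  have hS2 : S * S = Y := psqrt_mul_self hYpd.posSemidef
  have hSsym : Sᵀ = S := by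
    have := psqrt_isHermitian Y
    rwa [Matrix.IsHermitian, Matrix.conjTranspose_eq_transpose_of_trivial] at this
  have hSdet : IsUnit S.det := by
    have e1 : S.det * S.det = Y.det := by rw [← Matrix.det_mul, hS2]
    have e2 : (0:ℝ) < Y.det := hYpd.det_pos
    have hne : S.det ≠ 0 := by
      intro h0; rw [h0, mul_zero] at e1; exact (ne_of_gt e2) e1.symm
    exact hne.isUnit
  have hSisym : (S⁻¹)ᵀ = S⁻¹ := by rw [Matrix.transpose_nonsing_inv, hSsym]
  refine ⟨fromBlocks S (X * S⁻¹) 0 S⁻¹, ?_, ?_⟩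
  · show (fromBlocks S (X * S⁻¹) 0 S⁻¹)ᵀ * _root_.J n * fromBlocks S (X * S⁻¹) 0 S⁻¹
      = _root_.J n
    unfold _root_.J
    rw [Matrix.fromBlocks_transpose, Matrix.fromBlocks_multiply, Matrix.fromBlocks_multiply,
      Matrix.fromBlocks_inj]
    have ht : (X * S⁻¹)ᵀ = S⁻¹ * X := by rw [Matrix.transpose_mul, hSisym, hXsym]
    rw [hSsym, hSisym, ht]
    simp only [Matrix.mul_zero, Matrix.mul_one, Matrix.mul_neg, Matrix.zero_mul,
      Matrix.neg_mul, zero_add, add_zero, Matrix.transpose_zero, neg_neg, zero_sub]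
    refine ⟨?_, ?_, ?_, ?_⟩ <;>
      simp [Matrix.mul_nonsing_inv _ hSdet, Matrix.nonsing_inv_mul _ hSdet, Matrix.mul_assoc]
  · rw [act_eq, num, den]
    have e1 : bA (fromBlocks S (X * S⁻¹) 0 S⁻¹) = cM S := by
      rw [bA, Matrix.toBlocks_fromBlocks₁₁]
    have e2 : bB (fromBlocks S (X * S⁻¹) 0 S⁻¹) = cM X * cM S⁻¹ := by
      rw [bB, Matrix.toBlocks_fromBlocks₁₂, cM_mul]
    have e3 : bC (fromBlocks S (X * S⁻¹) 0 S⁻¹) = 0 := by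
      rw [bC, Matrix.toBlocks_fromBlocks₂₁, cM_zero]
    have e4 : bD (fromBlocks S (X * S⁻¹) 0 S⁻¹) = cM S⁻¹ := by
      rw [bD, Matrix.toBlocks_fromBlocks₂₂]
    rw [e1, e2, e3, e4, Matrix.zero_mul, zero_add]
    have hinv : (cM S⁻¹)⁻¹ = cM S := by
      apply Matrix.inv_eq_right_inv
      rw [← cM_mul, Matrix.nonsing_inv_mul _ hSdet, cM_one]
    rw [hinv, iOne, Matrix.mul_smul, Matrix.mul_one, Matrix.add_mul, smul_mul_assoc,
      Matrix.mul_assoc, ← cM_mul S S, hS2]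
    rw [show cM S⁻¹ * cM S = 1 from by
      rw [← cM_mul, Matrix.nonsing_inv_mul _ hSdet, cM_one], Matrix.mul_one, add_comm]
    exact (Z_decomp Z).symm

/-! ### the stabilizer of iOne -/

lemma stab_eq {k : SpMat n} (hk : k ∈ Sp n) (hfix : act k iOne = iOne) :
    k.toBlocks₂₁ = -(k.toBlocks₁₂) ∧ k.toBlocks₂₂ = k.toBlocks₁₁ := by
  have hd := den_det_isUnit hk iOne_mem
  have hnd : num k iOne = iOne * den k iOne := by
    have hfix' : num k iOne * (den k iOne)⁻¹ = iOne := hfix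
    calc num k iOne = num k iOne * ((den k iOne)⁻¹ * den k iOne) := by
          rw [Matrix.nonsing_inv_mul _ hd, mul_one]
    _ = (num k iOne * (den k iOne)⁻¹) * den k iOne := by rw [Matrix.mul_assoc]
    _ = iOne * den k iOne := by rw [hfix']
  have hmat : Complex.I • bA k + bB k = -(bC k) + Complex.I • bD k := by
    have e1 : num k iOne = Complex.I • bA k + bB k := by
      rw [num, iOne, Matrix.mul_smul, Matrix.mul_one]
    have e2 : iOne * den k iOne = -(bC k) + Complex.I • bD k := by
      rw [den, iOne, smul_mul_assoc, one_mul, Matrix.mul_smul, Matrix.mul_one, smul_add,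
        smul_smul, Complex.I_mul_I, neg_smul, one_smul]
    rw [← e1, ← e2, hnd]
  constructor <;> ext i j
  · have e := congrFun (congrFun hmat i) j
    simp only [Matrix.add_apply, Matrix.smul_apply, Matrix.neg_apply, bA, bB, bC, bD, cM,
      Matrix.map_apply, smul_eq_mul] at e
    have he := congrArg Complex.re e
    simp only [Complex.add_re, Complex.mul_re, Complex.I_re, Complex.I_im,
      Complex.ofReal_re, Complex.ofReal_im, Complex.neg_re] at he
    simp only [Matrix.neg_apply]
    linarith [he]
  · have e := congrFun (congrFun hmat i) j
    simp only [Matrix.add_apply, Matrix.smul_apply, Matrix.neg_apply, bA, bB, bC, bD, cM,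
      Matrix.map_apply, smul_eq_mul] at e
    have he := congrArg Complex.im e
    simp only [Complex.add_im, Complex.mul_im, Complex.I_re, Complex.I_im,
      Complex.ofReal_re, Complex.ofReal_im, Complex.neg_im] at he
    linarith [he]

/-! ### backward direction -/

lemma point_to_coboundary {γ : SpMat n} (hγ : γ ∈ Sp n) (hc : γ * tau γ = 1)
    {Z : Matrix (Fin n) (Fin n) ℂ} (hZ : Z ∈ Siegel n) (hact : act γ Z = -(conjM Z)) :
    ∃ h ∈ Sp n, γ = tau h * h⁻¹ := by
  classical
  obtain ⟨h₀, h₀Sp, h₀act⟩ := exists_h0 hZ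
  have hτ₀ : tau h₀ ∈ Sp n := tau_mem h₀Sp
  have hτ₀i : (tau h₀)⁻¹ ∈ Sp n := sp_inv_mem hτ₀
  set k : SpMat n := (tau h₀)⁻¹ * (γ * h₀) with hkdef
  have hkSp : k ∈ Sp n := sp_mul_mem hτ₀i (sp_mul_mem hγ h₀Sp)
  -- k fixes iOne
  have hτ₀act : act (tau h₀) iOne = -(conjM Z) := by
    have := act_tau_conj h₀ iOne
    rw [neg_conjM_iOne, h₀act] at this
    exact this
  have hkfix : act k iOne = iOne := by
    have e1 : act k iOne = act (tau h₀)⁻¹ (act γ (act h₀ iOne)) := by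
      rw [hkdef, act_mul hτ₀i (sp_mul_mem hγ h₀Sp) iOne_mem,
        act_mul hγ h₀Sp iOne_mem]
    rw [e1, h₀act, hact, ← hτ₀act, ← act_mul hτ₀i hτ₀ iOne_mem, sp_inv_mul hτ₀, act_one]
  -- k satisfies the cocycle condition
  have hktau : k * tau k = 1 := by
    have e1 : tau k = h₀⁻¹ * (tau γ * tau h₀) := by
      rw [hkdef, tau_mul, tau_mul, tau_inv hτ₀, tau_tau]
    rw [hkdef, e1]
    calc (tau h₀)⁻¹ * (γ * h₀) * (h₀⁻¹ * (tau γ * tau h₀))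
        = (tau h₀)⁻¹ * (γ * (h₀ * h₀⁻¹) * tau γ) * tau h₀ := by noncomm_ring
    _ = (tau h₀)⁻¹ * (γ * tau γ) * tau h₀ := by rw [sp_mul_inv h₀Sp, Matrix.mul_one]
    _ = (tau h₀)⁻¹ * tau h₀ := by rw [hc, Matrix.mul_one]
    _ = 1 := sp_inv_mul hτ₀
  -- blocks of k
  obtain ⟨hst1, hst2⟩ := stab_eq hkSp hkfix
  set A := k.toBlocks₁₁ with hA
  set B := k.toBlocks₁₂ with hB
  have hkb : k = fromBlocks A B (-B) A := by
    conv_lhs => rw [← Matrix.fromBlocks_toBlocks k]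
    rw [hst1, hst2]
  -- relations from k ∈ Sp
  obtain ⟨r1, r2, r3⟩ := sp_rel hkSp
  rw [hst1] at r1
  rw [hst1, hst2] at r3
  have hr1 : Aᵀ * B = Bᵀ * A := by
    have := r1
    rw [Matrix.mul_neg, Matrix.transpose_neg, Matrix.neg_mul] at this
    exact neg_inj.mp this
  have hr3 : Aᵀ * A + Bᵀ * B = 1 := by
    have := r3
    rw [Matrix.transpose_neg, Matrix.neg_mul, sub_neg_eq_add] at this
    exact this
  -- relations from the cocycle condition
  have hAAB : A * A + B * B = 1 ∧ A * B = B * A := by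
    have htk : tau k = fromBlocks A (-B) B A := by
      rw [tau_blocks k, hst1, hst2, neg_neg, ← hA, ← hB]
    rw [htk, hkb, Matrix.fromBlocks_multiply, ← Matrix.fromBlocks_one,
      Matrix.fromBlocks_inj] at hktau
    obtain ⟨c1, c2, _, _⟩ := hktau
    constructor
    · exact c1
    · have := c2
      rw [Matrix.mul_neg] at this
      have h2 : B * A - A * B = 0 := by rw [← this]; abel
      have := sub_eq_zero.mp h2
      exact this.symm
  -- the unitary matrix U
  set U : Matrix (Fin n) (Fin n) ℂ := cM A + Complex.I • cM B with hUdef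
  have hUH : Uᴴ = cM Aᵀ + Complex.I • (-(cM Bᵀ)) := by
    rw [hUdef, Matrix.conjTranspose_add, Matrix.conjTranspose_smul, cM_conjTranspose,
      cM_conjTranspose, Complex.star_def, Complex.conj_I, neg_smul, ← smul_neg]
  have hUunit : Uᴴ * U = 1 := by
    rw [hUH, hUdef, mulUU]
    rw [Matrix.neg_mul, sub_neg_eq_add, ← cM_mul, ← cM_mul, ← cM_add, hr3, cM_one]
    rw [Matrix.neg_mul, ← cM_mul, ← cM_mul]
    rw [show cM (Aᵀ * B) + -cM (Bᵀ * A) = cM (Aᵀ * B) - cM (Bᵀ * A) from by abel,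
      ← cM_sub, hr1, sub_self, cM_zero, smul_zero, add_zero]
  have hUconj : U * conjM U = 1 := by
    have hcU : conjM U = cM A + Complex.I • (-(cM B)) := by
      rw [hUdef, conjM_add, conjM_smul, conjM_cM, conjM_cM, Complex.conj_I, neg_smul,
        ← smul_neg]
    rw [hcU, hUdef, mulUU]
    rw [Matrix.mul_neg, sub_neg_eq_add, ← cM_mul, ← cM_mul, ← cM_add, hAAB.1, cM_one]
    rw [Matrix.mul_neg, ← cM_mul, ← cM_mul]
    rw [show -cM (A * B) + cM (B * A) = cM (B * A) - cM (A * B) from by abel,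
      ← cM_sub, hAAB.2, sub_self, cM_zero, smul_zero, add_zero]
  -- Hilbert 90
  obtain ⟨W, hWunit, hWU⟩ := hilbert90 hUunit hUconj
  have hψU : psi U = k := by
    rw [psi, hUdef, reP_decomp, imP_decomp, ← hkb]
  have hvSp : psi W ∈ Sp n := psi_sp hWunit
  have hkv : k = tau (psi W) * (psi W)⁻¹ := by
    rw [tau_psi, psi_inv hWunit, ← psi_mul, hWU, hψU]
  -- assemble
  refine ⟨h₀ * psi W, sp_mul_mem h₀Sp hvSp, ?_⟩
  rw [tau_mul, Matrix.mul_inv_rev]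
  calc γ = (tau h₀ * (tau h₀)⁻¹) * γ * (h₀ * h₀⁻¹) := by
        rw [sp_mul_inv hτ₀, sp_mul_inv h₀Sp, Matrix.one_mul, Matrix.mul_one]
  _ = tau h₀ * ((tau h₀)⁻¹ * (γ * h₀)) * h₀⁻¹ := by noncomm_ring
  _ = tau h₀ * k * h₀⁻¹ := by rw [← hkdef]
  _ = tau h₀ * (tau (psi W) * (psi W)⁻¹) * h₀⁻¹ := by rw [← hkv]
  _ = tau h₀ * tau (psi W) * ((psi W)⁻¹ * h₀⁻¹) := by noncomm_ring

end Cob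


/-- A cocycle γ is a coboundary iff it has a real point in the Siegel space. -/
theorem coboundary_iff_real_point (n : ℕ) (γ : SpMat n) (hγ : γ ∈ Sp n)
    (hc : γ * tau γ = 1) :
    (∃ h ∈ Sp n, γ = tau h * h⁻¹) ↔ ∃ Z ∈ Siegel n, act γ Z = -(conjM Z) := by
  constructor
  · rintro ⟨h, hh, he⟩
    exact Cob.coboundary_to_point h hh he
  · rintro ⟨Z, hZ, hact⟩
    exact Cob.point_to_coboundary hγ hc hZ hact
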